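/- arXiv:2205.01502 — 5 statements merged into one kernel-verified Lean document; each statement's English description precedes it below -/
import Mathlib

section
/- Let $L$ be a field of characteristic $0$, let $\alpha_1,\ldots,\alpha_n \in L$ be pairwise distinct with $n$ odd, let $P(X) = \prod_j (X - \alpha_j)$ and $P_k(X) = \prod_{j \neq k}(X - \alpha_j)$. Suppose $\lambda_1,\ldots,\lambda_n \in L$ satisfy $\sum_{i \neq j} \lambda_i / (\alpha_i - \alpha_j) = 0$ for every $j$. Set $R = \sum_j \lambda_j P_j$ and $Q = -\sum_j \lambda_j^2 P_j$. Then $P Q' - P' Q = R^2$ in $L[X]$, where primes denote formal derivatives. -/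
open Polynomial

open Polynomial in
private lemma derivative_finset_prod {R : Type*} [CommRing R] {ι : Type*} [DecidableEq ι]
    (s : Finset ι) (f : ι → R[X]) :
    derivative (∏ i ∈ s, f i) = ∑ i ∈ s, (∏ j ∈ s.erase i, f j) * derivative (f i) := by
  induction s using Finset.induction_on with
  | empty => simp
  | @insert a s ha ih =>
    rw [Finset.prod_insert ha, derivative_mul, Finset.sum_insert ha, ih,
        Finset.erase_insert ha, Finset.mul_sum]
    congr 1
    · exact mul_comm _ _
    · refine Finset.sum_congr rfl fun i hi => ?_
      have hia : i ≠ a := fun h => ha (h ▸ hi)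
      rw [Finset.erase_insert_of_ne hia.symm,
        Finset.prod_insert (fun h => ha (Finset.mem_of_mem_erase h))]
      ring


theorem stmt4 {L : Type*} [Field L] [CharZero L] {n : ℕ} (hn : Odd n)
    (α : Fin n → L) (hα : Function.Injective α)
    (P : L[X]) (hP : P = ∏ j, (X - C (α j)))
    (Pk : Fin n → L[X]) (hPk : ∀ k, Pk k = ∏ j ∈ Finset.univ.erase k, (X - C (α j)))
    (l : Fin n → L)
    (hl : ∀ j, ∑ i ∈ Finset.univ.erase j, l i / (α i - α j) = 0)
    (R Q : L[X])
    (hR : R = ∑ j, C (l j) * Pk j)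
    (hQ : Q = -∑ j, C (l j ^ 2) * Pk j) :
    P * derivative Q - derivative P * Q = R ^ 2 := by
  classical
  -- Basic factorizations
  have hfac : ∀ k, P = (X - C (α k)) * Pk k := by
    intro k
    rw [hP, hPk]
    exact (Finset.mul_prod_erase _ _ (Finset.mem_univ k)).symm
  have hPder : derivative P = ∑ j, Pk j := by
    rw [hP, derivative_finset_prod]
    refine Finset.sum_congr rfl fun j _ => ?_
    simp [hPk]
  have hsub : ∀ i j : Fin n, i ≠ j →
      Pk j = (X - C (α i)) * ∏ m ∈ (Finset.univ.erase j).erase i, (X - C (α m)) := by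
    intro i j hij
    rw [hPk]
    exact (Finset.mul_prod_erase _ _ (Finset.mem_erase.mpr ⟨hij, Finset.mem_univ i⟩)).symm
  have hPderPk : ∀ j, P * derivative (Pk j) =
      ∑ i ∈ Finset.univ.erase j, Pk i * Pk j := by
    intro j
    conv_lhs => rw [hPk j, derivative_finset_prod]
    rw [Finset.mul_sum]
    refine Finset.sum_congr rfl fun i hi => ?_
    have hij : i ≠ j := (Finset.mem_erase.mp hi).1
    rw [derivative_sub, derivative_X, derivative_C, sub_zero, mul_one,
      hfac i, hsub i j hij]
    ring
  have hdiff : ∀ i j : Fin n, i ≠ j →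
      Pk i * Pk j = C ((α i - α j)⁻¹) * (P * Pk i - P * Pk j) := by
    intro i j hij
    have hne : α i - α j ≠ 0 := sub_ne_zero.mpr (fun h => hij (hα h))
    have key : P * Pk i - P * Pk j = (C (α i) - C (α j)) * (Pk i * Pk j) := by
      nth_rewrite 1 [hfac j]
      nth_rewrite 1 [hfac i]
      ring
    rw [key, ← C_sub, ← mul_assoc, ← C_mul, inv_mul_cancel₀ hne, C_1, one_mul]
  -- derivative of Q
  have hQder : derivative Q = -∑ j, C (l j ^ 2) * derivative (Pk j) := by
    rw [hQ, derivative_neg, derivative_sum]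
    congr 1
    exact Finset.sum_congr rfl fun j _ => by rw [derivative_C_mul]
  -- LHS computation
  have hL : P * derivative Q - derivative P * Q = ∑ j, C (l j ^ 2) * (Pk j * Pk j) := by
    rw [hQder, hPder, hQ]
    rw [mul_neg, mul_neg, sub_neg_eq_add, Finset.mul_sum, Finset.mul_sum, neg_add_eq_sub,
      ← Finset.sum_sub_distrib]
    refine Finset.sum_congr rfl fun j _ => ?_
    have h1 : P * derivative (Pk j) = (∑ i ∈ Finset.univ.erase j, Pk i) * Pk j := by
      rw [hPderPk j, Finset.sum_mul]
    have h2 : (∑ i, Pk i) = Pk j + ∑ i ∈ Finset.univ.erase j, Pk i :=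
      (Finset.add_sum_erase _ _ (Finset.mem_univ j)).symm
    calc (∑ i, Pk i) * (C (l j ^ 2) * Pk j) - P * (C (l j ^ 2) * derivative (Pk j))
        = (∑ i, Pk i) * (C (l j ^ 2) * Pk j) - C (l j ^ 2) * (P * derivative (Pk j)) := by ring
      _ = C (l j ^ 2) * (Pk j * Pk j) := by rw [h1, h2]; ring
  -- RHS expansion
  have hR2 : R ^ 2 = (∑ j, C (l j ^ 2) * (Pk j * Pk j))
      + ∑ j, ∑ i ∈ Finset.univ.erase j, C (l i * l j) * (Pk i * Pk j) := by
    rw [hR, sq, Finset.sum_mul_sum, ← Finset.sum_add_distrib]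
    refine Finset.sum_congr rfl fun j _ => ?_
    rw [← Finset.add_sum_erase _ _ (Finset.mem_univ j)]
    congr 1
    · rw [sq, map_mul]; ring
    · exact Finset.sum_congr rfl fun i _ => by rw [map_mul]; ring
  -- scalar lemmas from hl
  have hl2 : ∀ j, ∑ i ∈ Finset.univ.erase j, l i * (α i - α j)⁻¹ = 0 := by
    intro j
    simpa [div_eq_mul_inv] using hl j
  have hl1 : ∀ i, ∑ j ∈ Finset.univ.erase i, l j * (α i - α j)⁻¹ = 0 := by
    intro i
    have h := hl2 i
    have : ∑ j ∈ Finset.univ.erase i, l j * (α i - α j)⁻¹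
        = -∑ j ∈ Finset.univ.erase i, l j * (α j - α i)⁻¹ := by
      rw [← Finset.sum_neg_distrib]
      refine Finset.sum_congr rfl fun j _ => ?_
      rw [show (α i - α j) = -(α j - α i) by ring, inv_neg]
      ring
    rw [this, h, neg_zero]
  -- the cross term vanishes
  have hT : (∑ j, ∑ i ∈ Finset.univ.erase j, C (l i * l j) * (Pk i * Pk j)) = 0 := by
    have stepA : (∑ j, ∑ i ∈ Finset.univ.erase j, C (l i * l j) * (Pk i * Pk j))
        = ∑ j, ∑ i ∈ Finset.univ.erase j,
            (C (l i * l j * (α i - α j)⁻¹) * (P * Pk i)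
              - C (l i * l j * (α i - α j)⁻¹) * (P * Pk j)) := by
      refine Finset.sum_congr rfl fun j _ => Finset.sum_congr rfl fun i hi => ?_
      have hij : i ≠ j := (Finset.mem_erase.mp hi).1
      rw [hdiff i j hij, map_mul (f := C) (l i * l j) ((α i - α j)⁻¹)]
      ring
    rw [stepA]
    simp only [Finset.sum_sub_distrib]
    have hB : ∀ j : Fin n, ∑ i ∈ Finset.univ.erase j,
        C (l i * l j * (α i - α j)⁻¹) * (P * Pk j) = 0 := by
      intro j
      rw [← Finset.sum_mul, ← map_sum]
      have : ∑ i ∈ Finset.univ.erase j, l i * l j * (α i - α j)⁻¹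
          = (∑ i ∈ Finset.univ.erase j, l i * (α i - α j)⁻¹) * l j := by
        rw [Finset.sum_mul]
        exact Finset.sum_congr rfl fun i _ => by ring
      rw [this, hl2 j, zero_mul, map_zero, zero_mul]
    have hA : (∑ j, ∑ i ∈ Finset.univ.erase j,
        C (l i * l j * (α i - α j)⁻¹) * (P * Pk i)) = 0 := by
      have ext1 : ∀ j : Fin n, ∑ i ∈ Finset.univ.erase j,
          C (l i * l j * (α i - α j)⁻¹) * (P * Pk i)
          = ∑ i, C (l i * l j * (α i - α j)⁻¹) * (P * Pk i) := by
        intro j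
        refine Finset.sum_erase _ ?_
        simp
      calc (∑ j, ∑ i ∈ Finset.univ.erase j, C (l i * l j * (α i - α j)⁻¹) * (P * Pk i))
          = ∑ j, ∑ i, C (l i * l j * (α i - α j)⁻¹) * (P * Pk i) := by
            exact Finset.sum_congr rfl fun j _ => ext1 j
        _ = ∑ i, ∑ j, C (l i * l j * (α i - α j)⁻¹) * (P * Pk i) := Finset.sum_comm
        _ = ∑ i : Fin n, (0 : L[X]) := by
            refine Finset.sum_congr rfl fun i _ => ?_
            rw [← Finset.sum_mul, ← map_sum]
            have e2 : ∑ j : Fin n, l i * l j * (α i - α j)⁻¹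
                = ∑ j ∈ Finset.univ.erase i, l i * l j * (α i - α j)⁻¹ := by
              refine (Finset.sum_erase _ ?_).symm
              simp
            have e3 : ∑ j ∈ Finset.univ.erase i, l i * l j * (α i - α j)⁻¹
                = l i * ∑ j ∈ Finset.univ.erase i, l j * (α i - α j)⁻¹ := by
              rw [Finset.mul_sum]
              exact Finset.sum_congr rfl fun j _ => by ring
            rw [e2, e3, hl1 i, mul_zero, map_zero, zero_mul]
        _ = 0 := Finset.sum_const_zero
    rw [hA, Finset.sum_eq_zero fun j _ => hB j, sub_zero]
  rw [hL, hR2, hT, add_zero]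
end

section
/- Let $L/K$ be a finite Galois extension of fields and let $V \neq \{0\}$ be an $L$-vector space equipped with a semilinear action of $G = \mathrm{Gal}(L/K)$, i.e. $\sigma(x+y) = \sigma(x) + \sigma(y)$ and $\sigma(\lambda x) = \sigma(\lambda)\sigma(x)$ for all $\sigma \in G$, $x, y \in V$, $\lambda \in L$. Then the fixed subspace $V^G = \{v \in V : \sigma(v) = v \text{ for all } \sigma \in G\}$ is nonzero. -/
theorem stmt5 {K L : Type*} [Field K] [Field L] [Algebra K L]
    [FiniteDimensional K L] [IsGalois K L]
    {V : Type*} [AddCommGroup V] [Module L V] [Nontrivial V]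
    (act : (L ≃ₐ[K] L) → V → V)
    (hadd : ∀ σ x y, act σ (x + y) = act σ x + act σ y)
    (hsmul : ∀ σ (l : L) x, act σ (l • x) = σ l • act σ x)
    (hone : ∀ x, act 1 x = x)
    (hmul : ∀ σ τ x, act (σ * τ) x = act σ (act τ x)) :
    ∃ v : V, v ≠ 0 ∧ ∀ σ, act σ v = v := by
  classical
  obtain ⟨v, hv⟩ := exists_ne (0 : V)
  -- the "trace" T l = ∑ σ, σ l • act σ v
  set T : L → V := fun l => ∑ σ : L ≃ₐ[K] L, σ l • act σ v with hT
  -- T l is fixed by every τ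
  have hfix : ∀ τ l, act τ (T l) = T l := by
    intro τ l
    have hsum : ∀ (s : Finset (L ≃ₐ[K] L)) (g : (L ≃ₐ[K] L) → V),
        act τ (∑ σ ∈ s, g σ) = ∑ σ ∈ s, act τ (g σ) := by
      intro s g
      induction s using Finset.induction with
      | empty =>
        have h0 : act τ (0 : V) = 0 := by
          have := hadd τ 0 0
          simpa using this
        simpa using h0
      | insert _ _ hx ih =>
        rw [Finset.sum_insert hx, Finset.sum_insert hx, hadd, ih]
    rw [hT]
    simp only
    rw [hsum]
    have : ∀ σ : L ≃ₐ[K] L, act τ (σ l • act σ v) = (τ * σ) l • act (τ * σ) v := by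
      intro σ
      rw [hsmul, ← hmul]
      rfl
    simp_rw [this]
    exact Fintype.sum_equiv (Equiv.mulLeft τ) _ _ (fun σ => rfl)
  -- there exists l with T l ≠ 0
  have hex : ∃ l, T l ≠ 0 := by
    by_contra h
    push_neg at h
    -- then for every dual functional f, ∑ σ, f (act σ v) • σ = 0 as a function
    have hli : LinearIndependent L (fun (f : L ≃ₐ[K] L) => (f : L → L)) :=
      LinearIndependent.comp (ι' := L ≃ₐ[K] L)
        (linearIndependent_monoidHom L L) (fun f => f)
        (fun x y h => by ext; exact DFunLike.ext_iff.1 h _)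
    have hv0 : v = 0 := by
      rw [← Module.forall_dual_apply_eq_zero_iff L]
      intro f
      have key : ∀ σ : L ≃ₐ[K] L, f (act σ v) = 0 := by
        have := Fintype.linearIndependent_iff.1 hli (fun σ => f (act σ v)) ?_
        · intro σ; exact this σ
        · funext l
          have h0 := h l
          have := congrArg f h0
          simpa [hT, map_sum, mul_comm] using this
      have := key 1
      rwa [hone] at this
    exact hv hv0
  obtain ⟨l, hl⟩ := hex
  exact ⟨T l, hl, fun σ => hfix σ l⟩
end

section
/- Let $K$ be a field of characteristic $0$, let $P \in K[X]$ be a monic irreducible polynomial of odd degree $n$, and suppose $Q, R \in K[X]$ are nonzero of degree at most $n-1$, with $PQ' - P'Q = R^2$. Then for every $t \in K$, the element $(-1)^{(n+1)/2} \, \mathrm{Res}(P, Q) \cdot \Delta(P - tQ)$ is a square in $K$, where $\mathrm{Res}$ denotes the resultant and $\Delta$ the discriminant. -/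
open Polynomial

/-- The resultant of two polynomials over a field `K`, computed via the roots of the first
polynomial in an algebraic closure: `Res(f,g) = lc(f)^(deg g) * ∏_{f(α)=0} g(α)`. -/
noncomputable def polyRes {K : Type*} [Field K] (f g : K[X]) : AlgebraicClosure K :=
  algebraMap K (AlgebraicClosure K) f.leadingCoeff ^ g.natDegree *
    (((f.map (algebraMap K (AlgebraicClosure K))).roots).map fun α => aeval α g).prod

/-- The discriminant of a polynomial over a field `K`:
`Δ(f) = (-1)^(n(n-1)/2) Res(f, f') / lc(f)`. -/
noncomputable def polyDisc {K : Type*} [Field K] (f : K[X]) : AlgebraicClosure K :=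
  (-1) ^ (f.natDegree * (f.natDegree - 1) / 2) *
    (algebraMap K (AlgebraicClosure K) f.leadingCoeff)⁻¹ * polyRes f (derivative f)

lemma descent' {K : Type*} [Field K] [CharZero K] (x : AlgebraicClosure K)
    (h : ∀ σ : AlgebraicClosure K ≃ₐ[K] AlgebraicClosure K, σ x = x) :
    ∃ s : K, algebraMap K (AlgebraicClosure K) s = x := by
  have hint : IsIntegral K x := Algebra.IsIntegral.isIntegral x
  set p := minpoly K x with hp
  have hpm : p.Monic := minpoly.monic hint
  have hpe : p ≠ 0 := hpm.ne_zero
  set φ := algebraMap K (AlgebraicClosure K)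
  have hroots : ∀ y ∈ (p.map φ).roots, y = x := by
    intro y hy
    have hy' : (p.map φ).IsRoot y := isRoot_of_mem_roots hy
    have hy0 : (Polynomial.aeval y) (minpoly K x) = 0 := by
      rw [← hp, aeval_def, ← eval_map]; exact hy'
    obtain ⟨σ, hσ⟩ := minpoly.exists_algEquiv_of_root (Algebra.IsAlgebraic.isAlgebraic x) hy0
    apply σ.injective
    rw [hσ, h σ]
  have hsep : p.Separable := (minpoly.irreducible hint).separable
  have hnodup : (p.map φ).roots.Nodup := nodup_roots hsep.map
  have hcard : (p.map φ).roots.card = p.natDegree := by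
    rw [← natDegree_map_eq_of_injective φ.injective p]
    exact splits_iff_card_roots.mp (IsAlgClosed.splits (p.map φ))
  have hdeg1 : p.natDegree = 1 := by
    have h1 : 1 ≤ p.natDegree := minpoly.natDegree_pos hint
    have hle : (p.map φ).roots ≤ {x} := (Multiset.le_iff_subset hnodup).mpr
      (fun y hy => by simp [hroots y hy])
    have := Multiset.card_le_card hle
    simp only [Multiset.card_singleton, hcard] at this
    omega
  have hform := p.eq_X_add_C_of_natDegree_le_one (le_of_eq hdeg1)
  have hc1 : p.coeff 1 = 1 := by
    have := hpm.leadingCoeff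
    rwa [Polynomial.leadingCoeff, hdeg1] at this
  refine ⟨-p.coeff 0, ?_⟩
  have hx : aeval x p = 0 := minpoly.aeval K x
  rw [hform, hc1] at hx
  simp only [map_add, map_mul, aeval_X, aeval_C, map_one, one_mul] at hx
  rw [map_neg]
  linear_combination -hx

lemma swap_lemma' {A : Type*} [Field A] [IsAlgClosed A] {p q : A[X]} (hpm : p.Monic) (_hq : q ≠ 0) :
    (p.roots.map q.eval).prod =
      q.leadingCoeff ^ p.natDegree * (-1) ^ (p.natDegree * q.natDegree) *
        (q.roots.map p.eval).prod := by
  have hps : Splits p := IsAlgClosed.splits p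
  have hqs : Splits q := IsAlgClosed.splits q
  have cardp : p.roots.card = p.natDegree := splits_iff_card_roots.mp hps
  have cardq : q.roots.card = q.natDegree := splits_iff_card_roots.mp hqs
  have hqe : ∀ α : A, q.eval α = q.leadingCoeff * (q.roots.map fun β => α - β).prod := by
    intro α
    conv_lhs => rw [hqs.eq_prod_roots]
    rw [eval_mul, eval_C, eval_multiset_prod, Multiset.map_map]
    simp
  have hpe : ∀ β : A, p.eval β = (p.roots.map fun α => β - α).prod := by
    intro β
    conv_lhs => rw [hps.eq_prod_roots_of_monic hpm]
    rw [eval_multiset_prod, Multiset.map_map]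
    simp
  set D := (p.roots.map fun α => (q.roots.map fun β => α - β).prod).prod with hD
  have stepA : (p.roots.map q.eval).prod = q.leadingCoeff ^ p.natDegree * D := by
    rw [Multiset.map_congr rfl fun α _ => hqe α, Multiset.prod_map_mul]
    congr 1
    rw [Multiset.map_const', Multiset.prod_replicate, cardp]
  have stepB : (q.roots.map p.eval).prod = (-1) ^ (p.natDegree * q.natDegree) * D := by
    rw [Multiset.map_congr rfl fun β _ => hpe β]
    have inner : ∀ β : A, (p.roots.map fun α => β - α).prod
        = (-1) ^ p.natDegree * (p.roots.map fun α => α - β).prod := by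
      intro β
      have : (p.roots.map fun α => β - α) = p.roots.map fun α => (-1) * (α - β) := by
        apply Multiset.map_congr rfl; intro a _; ring
      rw [this, Multiset.prod_map_mul, Multiset.map_const', Multiset.prod_replicate, cardp]
    rw [Multiset.map_congr rfl fun β _ => inner β, Multiset.prod_map_mul,
      Multiset.map_const', Multiset.prod_replicate, cardq, ← pow_mul,
      Multiset.prod_map_prod_map]
  rw [stepA, stepB]
  have he : ((-1:A) ^ (p.natDegree * q.natDegree)) * ((-1:A) ^ (p.natDegree * q.natDegree)) = 1 := by
    rw [← pow_add, ← two_mul]; exact Even.neg_one_pow (even_two_mul _)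
  calc q.leadingCoeff ^ p.natDegree * D
      = q.leadingCoeff ^ p.natDegree * (((-1:A) ^ (p.natDegree * q.natDegree)) * ((-1:A) ^ (p.natDegree * q.natDegree))) * D := by rw [he]; ring
    _ = _ := by ring

theorem stmt6 {K : Type*} [Field K] [CharZero K] {n : ℕ} (hn : Odd n)
    (P Q R : K[X]) (hPm : P.Monic) (hPirr : Irreducible P) (hPdeg : P.natDegree = n)
    (hQ : Q ≠ 0) (hR : R ≠ 0)
    (hQdeg : Q.natDegree ≤ n - 1) (hRdeg : R.natDegree ≤ n - 1)
    (hW : P * derivative Q - derivative P * Q = R ^ 2) :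
    ∀ t : K, ∃ s : K,
      (-1) ^ ((n + 1) / 2) * polyRes P Q * polyDisc (P - C t * Q) =
        algebraMap K (AlgebraicClosure K) s ^ 2 := by
  intro t
  have hn1 : 1 ≤ n := hn.pos
  set A := AlgebraicClosure K with hA
  set φ := algebraMap K A with hφ
  set F := P - C t * Q with hF
  have hQd : (C t * Q).natDegree < P.natDegree := by
    have := natDegree_C_mul_le t Q; omega
  have hFd : F.natDegree = n := by
    rw [hF, natDegree_sub_eq_left_of_natDegree_lt hQd, hPdeg]
  have hFm : F.Monic := by
    have : F.leadingCoeff = 1 := by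
      rw [leadingCoeff, hFd, ← hPdeg, hF, coeff_sub,
        coeff_eq_zero_of_natDegree_lt hQd, sub_zero, ← leadingCoeff, hPm.leadingCoeff]
    exact this
  set Fa := F.map φ with hFa
  set ρ := Fa.roots with hρ
  have hφinj : Function.Injective φ := φ.injective
  have hFaM : Fa.Monic := hFm.map φ
  have hFand : Fa.natDegree = n := by rw [hFa, natDegree_map_eq_of_injective hφinj, hFd]
  have hcard : Multiset.card ρ = n := by
    rw [hρ, ← hFand]
    exact splits_iff_card_roots.mp (IsAlgClosed.splits Fa)
  have haev : ∀ (g : K[X]) (α : A), aeval α g = (g.map φ).eval α := fun g α => by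
    rw [aeval_def, eval_map]
  -- key pointwise identity
  have key : ∀ α ∈ ρ, (aeval α Q) * (aeval α (derivative F)) = -(aeval α R) ^ 2 := by
    intro α hα
    have h0 : aeval α F = 0 := by rw [haev]; exact isRoot_of_mem_roots hα
    have h1 : aeval α P - φ t * aeval α Q = 0 := by
      rw [hF] at h0; simpa using h0
    have h2 : aeval α P * aeval α (derivative Q) - aeval α (derivative P) * aeval α Q
        = (aeval α R) ^ 2 := by
      have := congrArg (aeval α) hW; simpa using this
    have hdF : aeval α (derivative F)
        = aeval α (derivative P) - φ t * aeval α (derivative Q) := by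
      rw [hF, derivative_sub, derivative_C_mul]; simp; exact Or.inl rfl
    rw [hdF]
    linear_combination (aeval α (derivative Q)) * h1 - h2
  -- product identity
  have hprod : (ρ.map fun α => aeval α Q).prod * (ρ.map fun α => aeval α (derivative F)).prod
      = -((ρ.map fun α => aeval α R).prod) ^ 2 := by
    rw [← Multiset.prod_map_mul, Multiset.map_congr rfl key]
    have : ρ.map (fun α => -(aeval α R) ^ 2) = ρ.map fun α => (-1) * (aeval α R) ^ 2 := by
      exact Multiset.map_congr rfl fun a _ => by ring
    rw [this, Multiset.prod_map_mul, Multiset.map_const', Multiset.prod_replicate, hcard,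
      Multiset.prod_map_pow, hn.neg_one_pow]
    ring
  -- polyRes P Q = ∏ over roots of Fa
  have hresPQ : polyRes P Q = (ρ.map fun α => aeval α Q).prod := by
    rw [polyRes, hPm.leadingCoeff, map_one, one_pow, one_mul]
    have e1 : ((P.map φ).roots.map fun α => aeval α Q).prod
        = ((P.map φ).roots.map (Q.map φ).eval).prod := by
      apply congrArg; exact Multiset.map_congr rfl fun α _ => haev Q α
    have e2 : (ρ.map fun α => aeval α Q).prod = (ρ.map (Q.map φ).eval).prod := by
      apply congrArg; exact Multiset.map_congr rfl fun α _ => haev Q α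
    rw [e1, e2]
    have hPaM : (P.map φ).Monic := hPm.map φ
    have hQa : Q.map φ ≠ 0 := by
      simpa using (Polynomial.map_ne_zero_iff hφinj).2 hQ
    rw [swap_lemma' hPaM hQa, swap_lemma' hFaM hQa]
    have hnd : (P.map φ).natDegree = Fa.natDegree := by
      rw [natDegree_map_eq_of_injective hφinj, hPdeg, hFand]
    rw [hnd]
    congr 1
    apply congrArg
    apply Multiset.map_congr rfl
    intro β hβ
    have hβ0 : (Q.map φ).eval β = 0 := isRoot_of_mem_roots hβ
    rw [hFa, hF]
    rw [Polynomial.map_sub, Polynomial.map_mul, Polynomial.map_C, eval_sub, eval_mul, eval_C,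
      hβ0, mul_zero, sub_zero]
  -- polyDisc F
  have hdisc : polyDisc F = (-1) ^ (n * (n - 1) / 2) * (ρ.map fun α => aeval α (derivative F)).prod := by
    rw [polyDisc, polyRes, hFm.leadingCoeff, map_one, one_pow, inv_one, hFd, one_mul, mul_one]
  -- assemble
  have hsign : Odd ((n + 1) / 2 + n * (n - 1) / 2) := by
    obtain ⟨k, hk⟩ := hn
    subst hk
    have e1 : (2 * k + 1 + 1) / 2 = k + 1 := by omega
    have e2 : (2 * k + 1) * (2 * k + 1 - 1) / 2 = (2 * k + 1) * k := by
      rw [Nat.add_sub_cancel, show (2 * k + 1) * (2 * k) = ((2 * k + 1) * k) * 2 by ring]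
      exact Nat.mul_div_cancel _ (by norm_num)
    rw [e1, e2]
    exact ⟨k * k + k, by ring⟩
  -- invariance of r under Galois
  set r := (ρ.map fun α => aeval α R).prod with hr
  have hinv : ∀ σ : AlgebraicClosure K ≃ₐ[K] AlgebraicClosure K, σ r = r := by
    intro σ
    have hσφ : (σ : A →+* A).comp φ = φ := σ.toAlgHom.comp_algebraMap
    have hρσ : ρ.map σ = ρ := by
      have h1 : Fa.roots.map (σ : A →+* A) = (Fa.map (σ : A →+* A)).roots :=
        ((IsAlgClosed.splits Fa).roots_map _).symm
      have h2 : Fa.map (σ : A →+* A) = Fa := by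
        rw [hFa, Polynomial.map_map, hσφ]
      rw [hρ]
      calc Fa.roots.map σ = Fa.roots.map (σ : A →+* A) := rfl
        _ = (Fa.map (σ : A →+* A)).roots := h1
        _ = Fa.roots := by rw [h2]
    rw [hr]
    rw [map_multiset_prod, Multiset.map_map]
    conv_rhs => rw [← hρσ, Multiset.map_map]
    apply congrArg
    apply Multiset.map_congr rfl
    intro α _
    exact (aeval_algHom_apply σ α R).symm
  obtain ⟨s, hs⟩ := descent' r hinv
  · refine ⟨s, ?_⟩
    rw [hresPQ, hdisc, hs]
    calc (-1 : A) ^ ((n + 1) / 2) * (ρ.map fun α => aeval α Q).prod *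
          ((-1) ^ (n * (n - 1) / 2) * (ρ.map fun α => aeval α (derivative F)).prod)
        = ((-1) ^ ((n + 1) / 2) * (-1) ^ (n * (n - 1) / 2)) *
          ((ρ.map fun α => aeval α Q).prod * (ρ.map fun α => aeval α (derivative F)).prod) := by
          ring
      _ = ((-1) ^ ((n + 1) / 2 + n * (n - 1) / 2)) * (-(r) ^ 2) := by rw [← pow_add, hprod]
      _ = r ^ 2 := by rw [hsign.neg_one_pow]; ring
end

section
/- Let $n \geq 4$ be even, and let $P(X) = X^n - n X^{n-1}$, $Q(X) = -nX + (n-2)^2$ in $\mathbb{Q}[X]$. Then, as polynomials in $T$, the discriminant of $P - TQ$ (a degree-$n$ polynomial in $X$ over $\mathbb{Q}(T)$) equals $(-1)^{n/2+1}(n-1)^{n-1} n^n T^{n-2} (T - (n-2)^{n-2})^2$. -/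
open Polynomial

set_option maxHeartbeats 1600000 in
theorem stmt9 {n : ℕ} (hn : 4 ≤ n) (hne : Even n)
    (P Q : (RatFunc ℚ)[X])
    (hP : P = X ^ n - C (n : RatFunc ℚ) * X ^ (n - 1))
    (hQ : Q = -(C (n : RatFunc ℚ)) * X + C (((n : RatFunc ℚ) - 2) ^ 2)) :
    polyDisc (P - C RatFunc.X * Q) =
      algebraMap (RatFunc ℚ) (AlgebraicClosure (RatFunc ℚ))
        ((-1) ^ (n / 2 + 1) * ((n : RatFunc ℚ) - 1) ^ (n - 1) * (n : RatFunc ℚ) ^ n *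
          RatFunc.X ^ (n - 2) * (RatFunc.X - ((n : RatFunc ℚ) - 2) ^ (n - 2)) ^ 2) := by
  obtain ⟨k, rfl⟩ : ∃ k, n = 2 * k + 2 := by
    rcases hne with ⟨j, hj⟩; exact ⟨j - 1, by omega⟩
  set m : ℕ := 2 * k with hmk
  clear_value m
  have hk1 : 1 ≤ k := by omega
  haveI : CharZero (RatFunc ℚ) :=
    charZero_of_injective_algebraMap (RatFunc.algebraMap_injective ℚ)
  set τ : RatFunc ℚ := RatFunc.X with hτ
  clear_value τ
  set ν : RatFunc ℚ := ((m : RatFunc ℚ) + 2) with hν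
  clear_value ν
  have hcast : ((m + 2 : ℕ) : RatFunc ℚ) = ν := by push_cast [hν]; ring
  have hm1 : m + 2 - 1 = m + 1 := by omega
  have hm2 : m + 2 - 2 = m := by omega
  have hνm : (m : RatFunc ℚ) ≠ 0 := by
    have := (Nat.cast_ne_zero (R := RatFunc ℚ)).mpr (show m ≠ 0 by omega); exact this
  have hν0 : ν ≠ 0 := by
    rw [← hcast]; exact Nat.cast_ne_zero.mpr (by omega)
  have hν1 : ν - 1 ≠ 0 := by
    have h1 : ((m : RatFunc ℚ) + 1) ≠ 0 := by
      have : ((m + 1 : ℕ) : RatFunc ℚ) ≠ 0 := Nat.cast_ne_zero.mpr (by omega)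
      push_cast at this; exact this
    intro h; exact h1 (by rw [hν] at h; linear_combination h)
  have hν2 : ν - 2 ≠ 0 := by rw [hν]; simpa using hνm
  set f : (RatFunc ℚ)[X] := P - C τ * Q with hf
  clear_value f
  have hPm : P = X ^ (m + 2) - C ν * X ^ (m + 1) := by rw [hP, hcast, hm1]
  have hQm : Q = -(C ν) * X + C ((ν - 2) ^ 2) := by rw [hQ, hcast]
  have hmonic : f.Monic := by
    rw [hf, hPm, hQm]; monicity!
    exact fun h => absurd h (by omega)
  have hdeg : f.natDegree = m + 2 := by
    rw [hf, hPm, hQm]; compute_degree!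
    simp [show ¬ (m+2=1) from by omega]
  set φ : RatFunc ℚ →+* AlgebraicClosure (RatFunc ℚ) :=
    (algebraMap (RatFunc ℚ) (AlgebraicClosure (RatFunc ℚ))) with hφ
  clear_value φ
  have hsplits : Splits (f.map φ) := IsAlgClosed.splits _
  set R := (f.map φ).roots with hR
  clear_value R
  have hcard : Multiset.card R = m + 2 := by
    have h := (splits_iff_card_roots).mp hsplits
    rw [natDegree_map, hdeg] at h
    rw [hR]; exact h
  have hprodform : f.map φ = (R.map fun a => X - C a).prod := by
    rw [hR]; exact hsplits.eq_prod_roots_of_monic (hmonic.map φ)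
  have heval : ∀ c : AlgebraicClosure (RatFunc ℚ),
      aeval c f = (R.map fun a => c - a).prod := by
    intro c
    rw [aeval_def, ← hφ, ← eval_map, hprodform, eval_multiset_prod, Multiset.map_map]
    simp [Function.comp]
  have hroot : ∀ a ∈ R, aeval a f = 0 := by
    intro a ha
    have h := isRoot_of_mem_roots (hR ▸ ha)
    rw [IsRoot.def, eval_map] at h
    rw [aeval_def, ← hφ]; exact h
  have hEvenm2 : Even (m + 2) := ⟨k + 1, by omega⟩
  have hEvenm : Even m := ⟨k, by omega⟩
  have hgen : ∀ c : RatFunc ℚ, (R.map fun a => a - φ c).prod = φ (f.eval c) := by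
    intro c
    have h1 : (R.map fun a => a - φ c) = R.map fun a => (-1) * (φ c - a) :=
      Multiset.map_congr rfl fun x _ => by ring
    rw [h1, Multiset.prod_map_mul, Multiset.map_const', Multiset.prod_replicate, hcard,
      Even.neg_one_pow hEvenm2, one_mul, ← heval (φ c)]
    rw [hφ]
    exact aeval_algebraMap_apply_eq_algebraMap_eval c f
  have hgen0 : (R.map fun a => a).prod = φ (f.eval 0) := by
    have h := hgen 0
    simpa using h
  -- the product of Q over the roots
  set σ : RatFunc ℚ := (ν - 2) ^ 2 / ν with hσ
  clear_value σ
  have hνσ : ν * σ = (ν - 2) ^ 2 := by rw [hσ]; field_simp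
  have haQ : ∀ a : AlgebraicClosure (RatFunc ℚ), aeval a Q = -(φ ν) * (a - φ σ) := by
    intro a
    rw [hQm]
    simp only [map_add, map_mul, map_neg, aeval_X, aeval_C, ← hφ]
    have h2 : φ ((ν - 2) ^ 2) = φ ν * φ σ := by rw [← map_mul, ← hνσ]
    rw [h2]; ring
  have hQprod : (R.map fun a => aeval a Q).prod = φ (ν ^ (m + 2) * f.eval σ) := by
    have h1 : (R.map fun a => aeval a Q) = R.map fun a => (-(φ ν)) * (a - φ σ) :=
      Multiset.map_congr rfl fun x _ => haQ x
    rw [h1, Multiset.prod_map_mul, Multiset.map_const', Multiset.prod_replicate, hcard,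
      hgen σ, Even.neg_pow hEvenm2, ← map_pow, ← map_mul]
  have hevalσ : ν ^ (m + 2) * f.eval σ = -4 * (ν - 1) * (ν - 2) ^ (2 * m + 2) := by
    have h0 : f.eval σ = σ ^ (m + 2) - ν * σ ^ (m + 1) := by
      rw [hf, hPm, hQm]
      simp only [eval_sub, eval_add, eval_mul, eval_pow, eval_X, eval_C, eval_neg]
      linear_combination τ * hνσ
    calc ν ^ (m + 2) * f.eval σ
        = (ν * σ) ^ m * ((ν * σ) ^ 2 - ν ^ 2 * (ν * σ)) := by rw [h0]; ring
      _ = -4 * (ν - 1) * (ν - 2) ^ (2 * m + 2) := by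
          rw [hνσ, ← pow_mul]
          ring
  have hq0 : -4 * (ν - 1) * (ν - 2) ^ (2 * m + 2) ≠ 0 := by
    apply mul_ne_zero (mul_ne_zero (by norm_num) hν1) (pow_ne_zero _ hν2)
  -- the numerator polynomial identity
  have hcast1 : ((m + 1 : ℕ) : RatFunc ℚ) = ν - 1 := by push_cast [hν]; ring
  have hP' : derivative P = C ν * X ^ (m + 1) - C (ν * (ν - 1)) * X ^ m := by
    rw [hPm, derivative_sub, derivative_C_mul, derivative_X_pow, derivative_X_pow]
    rw [show m + 2 - 1 = m + 1 from by omega, show m + 1 - 1 = m from by omega, hcast, hcast1, C_mul]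
    ring
  have hQ' : derivative Q = -(C ν) := by
    rw [hQm, show -C ν * X + C ((ν - 2) ^ 2) = C (-ν) * X + C ((ν - 2) ^ 2) by rw [map_neg],
      derivative_add, derivative_C_mul, derivative_X, derivative_C, add_zero, mul_one, map_neg]
  have hW : derivative P * Q - P * derivative Q
      = C (-(ν * (ν - 1))) * (X ^ m * (X - C (ν - 2)) ^ 2) := by
    rw [hP', hQ', hPm, hQm]
    simp only [C_mul, C_neg, C_sub, map_ofNat, C_1, C_pow]
    ring
  have hf' : derivative f = derivative P - C τ * derivative Q := by
    rw [hf, derivative_sub, derivative_C_mul]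
  have hfQ : derivative f * Q = (derivative P * Q - P * derivative Q) + derivative Q * f := by
    rw [hf', hf]; ring
  have hkey : ∀ a ∈ R, aeval a (derivative f) * aeval a Q
      = aeval a (derivative P * Q - P * derivative Q) := by
    intro a ha
    have h := congrArg (aeval a) hfQ
    simpa [map_mul, map_add, map_sub, hroot a ha] using h
  have haW : ∀ a : AlgebraicClosure (RatFunc ℚ),
      aeval a (derivative P * Q - P * derivative Q)
      = (-(φ (ν * (ν - 1)))) * (a ^ m * (a - φ (ν - 2)) ^ 2) := by
    intro a
    rw [hW]
    simp only [map_mul, map_pow, map_sub, map_neg, aeval_C, aeval_X, ← hφ]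
  have hWprod : (R.map fun a => aeval a (derivative P * Q - P * derivative Q)).prod
      = φ ((ν * (ν - 1)) ^ (m + 2) * (f.eval 0) ^ m * (f.eval (ν - 2)) ^ 2) := by
    have h1 : (R.map fun a => aeval a (derivative P * Q - P * derivative Q))
        = R.map fun a => (-(φ (ν * (ν - 1)))) * (a ^ m * (a - φ (ν - 2)) ^ 2) :=
      Multiset.map_congr rfl fun x _ => haW x
    rw [h1, Multiset.prod_map_mul, Multiset.map_const', Multiset.prod_replicate, hcard,
      Even.neg_pow hEvenm2, Multiset.prod_map_mul, Multiset.prod_map_pow,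
      Multiset.prod_map_pow, hgen0, hgen (ν - 2), ← map_pow, ← map_pow, ← map_pow,
      ← map_mul, ← map_mul]
    exact congrArg φ (by ring)
  have he0 : f.eval 0 = -(τ * (ν - 2) ^ 2) := by
    rw [hf, hPm, hQm]
    simp only [eval_sub, eval_add, eval_mul, eval_pow, eval_X, eval_C, eval_neg]
    rw [zero_pow (by omega : m + 2 ≠ 0), zero_pow (by omega : m + 1 ≠ 0)]
    ring
  have heμ : f.eval (ν - 2) = 2 * (ν - 2) * (τ - (ν - 2) ^ m) := by
    rw [hf, hPm, hQm]
    simp only [eval_sub, eval_add, eval_mul, eval_pow, eval_X, eval_C, eval_neg]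
    ring
  have hfQprod : (R.map fun a => aeval a (derivative f)).prod * φ (ν ^ (m + 2) * f.eval σ)
      = φ ((ν * (ν - 1)) ^ (m + 2) * (f.eval 0) ^ m * (f.eval (ν - 2)) ^ 2) := by
    rw [← hQprod, ← Multiset.prod_map_mul, ← hWprod]
    exact congrArg Multiset.prod (Multiset.map_congr rfl hkey)
  have hφq0 : φ (ν ^ (m + 2) * f.eval σ) ≠ 0 := by
    rw [hevalσ]
    exact (map_ne_zero φ).mpr hq0
  have hprodF' : (R.map fun a => aeval a (derivative f)).prod
      = φ (((ν * (ν - 1)) ^ (m + 2) * (f.eval 0) ^ m * (f.eval (ν - 2)) ^ 2)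
          / (ν ^ (m + 2) * f.eval σ)) := by
    rw [map_div₀]
    exact eq_div_of_mul_eq hφq0 hfQprod
  have hres : polyRes f (derivative f)
      = (R.map fun a => aeval a (derivative f)).prod := by
    rw [polyRes]
    simp only [← hφ, ← hR]
    rw [hmonic.leadingCoeff, map_one, one_pow, one_mul]
  -- final assembly
  rw [polyDisc, hdeg, hmonic.leadingCoeff]
  simp only [← hφ]
  rw [map_one, inv_one, mul_one, hres, hprodF']
  rw [show m + 2 - 1 = m + 1 from by omega]
  have hexp : (m + 2) * (m + 1) / 2 = (2 * k + 1) * (k + 1) := by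
    have h2 : (m + 2) * (m + 1) = 2 * ((2 * k + 1) * (k + 1)) := by rw [hmk]; ring
    omega
  rw [hexp]
  have hsgn1 : ((-1 : AlgebraicClosure (RatFunc ℚ)) ^ ((2 * k + 1) * (k + 1)))
      = φ ((-1 : RatFunc ℚ) ^ (k + 1)) := by
    rw [pow_mul, Odd.neg_one_pow ⟨k, by omega⟩, map_pow, map_neg, map_one]
  rw [hsgn1, ← map_mul]
  congr 1
  -- now a pure identity in RatFunc ℚ
  rw [he0, heμ, hevalσ]
  rw [show m + 2 - 2 = m from by omega,
    show (m + 2) / 2 + 1 = k + 2 from by omega, hcast]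
  rw [← mul_div_assoc]
  rw [div_eq_iff hq0]
  have hsgn2 : ((-1 : RatFunc ℚ)) ^ (k + 2) = -(-1 : RatFunc ℚ) ^ (k + 1) := by ring
  rw [hsgn2]
  have hnegpow : (-(τ * (ν - 2) ^ 2)) ^ m = τ ^ m * ((ν - 2) ^ 2) ^ m := by
    rw [hEvenm.neg_pow, mul_pow]
  rw [hnegpow, ← pow_mul]
  have h2m : (ν - 2) ^ (2 * m) = ((ν - 2) ^ m) ^ 2 := by rw [← pow_mul, mul_comm]
  have h2m2 : (ν - 2) ^ (2 * m + 2) = ((ν - 2) ^ m) ^ 2 * (ν - 2) ^ 2 := by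
    rw [pow_add, ← pow_mul, mul_comm 2 m]
  rw [h2m, h2m2, mul_pow]
  generalize (ν - 2) ^ m = w
  ring
end

section
/- Let $K$ be a field of characteristic $0$ and let $k, m \in K$. The discriminant (in $X$) of the polynomial $X^4 - 2kX^2 - 8mX + k^2 - T(X^3 + kX + m) \in K(T)[X]$ equals $(-4k^3 - 27m^2)\,(T^3 + 16kT + 64m)^2$. -/
open Polynomial

section aux
variable {F : Type*} [Field F] (c3 c2 c1 c0 : F)

private noncomputable def quart : F[X] :=
  X ^ 4 + C c3 * X ^ 3 + C c2 * X ^ 2 + C c1 * X + C c0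

private lemma quart_monic : (quart c3 c2 c1 c0).Monic := by unfold quart; monicity!

private lemma quart_deg : (quart c3 c2 c1 c0).natDegree = 4 := by unfold quart; compute_degree!

private lemma quart_der : derivative (quart c3 c2 c1 c0) =
    C (4 : F) * X ^ 3 + C (3 * c3) * X ^ 2 + C (2 * c2) * X + C c1 := by
  unfold quart
  simp only [derivative_add, derivative_mul, derivative_C, derivative_X, derivative_X_pow]
  simp only [map_mul, map_ofNat, Polynomial.C_eq_natCast]
  push_cast
  ring

private lemma quart_eval₂ {L : Type*} [Field L] (φ : F →+* L) (x : L) :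
    eval₂ φ x (quart c3 c2 c1 c0) =
      x ^ 4 + φ c3 * x ^ 3 + φ c2 * x ^ 2 + φ c1 * x + φ c0 := by
  unfold quart
  simp only [eval₂_add, eval₂_mul, eval₂_pow, eval₂_X, eval₂_C]

private lemma quart_aeval_der {L : Type*} [Field L] [Algebra F L] (x : L) :
    aeval x (derivative (quart c3 c2 c1 c0)) =
      4 * x ^ 3 + 3 * algebraMap F L c3 * x ^ 2 + 2 * algebraMap F L c2 * x
        + algebraMap F L c1 := by
  rw [quart_der]
  simp only [map_add, map_mul, map_pow, aeval_C, aeval_X, map_ofNat]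
end aux

theorem multiset_card_eq_four' {α : Type*} {s : Multiset α} (h : Multiset.card s = 4) :
    ∃ a b c d, s = {a, b, c, d} := by
  have h0 : 0 < Multiset.card s := by omega
  obtain ⟨a, ha⟩ := Multiset.card_pos_iff_exists_mem.mp h0
  obtain ⟨t, rfl⟩ := Multiset.exists_cons_of_mem ha
  rw [Multiset.card_cons] at h
  obtain ⟨b, c, d, rfl⟩ := Multiset.card_eq_three.mp (show Multiset.card t = 3 by omega)
  exact ⟨a, b, c, d, rfl⟩

set_option maxHeartbeats 4000000 in
theorem stmt19 {K : Type*} [Field K] [CharZero K] (k m : K) :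
    polyDisc
        (X ^ 4 - C (2 * algebraMap K (RatFunc K) k) * X ^ 2 -
          C (8 * algebraMap K (RatFunc K) m) * X + C (algebraMap K (RatFunc K) k ^ 2) -
          C RatFunc.X *
            (X ^ 3 + C (algebraMap K (RatFunc K) k) * X + C (algebraMap K (RatFunc K) m))) =
      algebraMap (RatFunc K) (AlgebraicClosure (RatFunc K))
        ((-4 * algebraMap K (RatFunc K) k ^ 3 - 27 * algebraMap K (RatFunc K) m ^ 2) *
          (RatFunc.X ^ 3 + 16 * algebraMap K (RatFunc K) k * RatFunc.X +
              64 * algebraMap K (RatFunc K) m) ^ 2) := by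
  haveI : CharZero (RatFunc K) :=
    charZero_of_injective_algebraMap (algebraMap K (RatFunc K)).injective
  obtain ⟨k1, hk1⟩ : ∃ x, algebraMap K (RatFunc K) k = x := ⟨_, rfl⟩
  obtain ⟨m1, hm1⟩ : ∃ x, algebraMap K (RatFunc K) m = x := ⟨_, rfl⟩
  obtain ⟨t1, ht1⟩ : ∃ x, (RatFunc.X : RatFunc K) = x := ⟨_, rfl⟩
  rw [hk1, hm1, ht1]
  have hf : (X ^ 4 - C (2 * k1) * X ^ 2 - C (8 * m1) * X + C (k1 ^ 2) -
        C t1 * (X ^ 3 + C k1 * X + C m1)) =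
      quart (-t1) (-(2 * k1)) (-(8 * m1 + k1 * t1)) (k1 ^ 2 - m1 * t1) := by
    unfold quart
    simp only [map_add, map_mul, map_sub, map_neg, map_pow]
    ring
  rw [hf]
  obtain ⟨f, hfdef⟩ : ∃ p, quart (-t1) (-(2 * k1)) (-(8 * m1 + k1 * t1)) (k1 ^ 2 - m1 * t1) = p :=
    ⟨_, rfl⟩
  rw [hfdef]
  have hmon : f.Monic := hfdef ▸ quart_monic _ _ _ _
  have hdeg : f.natDegree = 4 := hfdef ▸ quart_deg _ _ _ _
  set L := AlgebraicClosure (RatFunc K) with hL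
  set φ := algebraMap (RatFunc K) L with hφ
  have hGmon : (f.map φ).Monic := hmon.map φ
  have hGsplits : (f.map φ).Splits :=
    IsAlgClosed.splits (f.map φ)
  have hcard : Multiset.card (f.map φ).roots = 4 := by
    rw [splits_iff_card_roots.mp hGsplits, natDegree_map, hdeg]
  obtain ⟨a, b, c, d, habcd⟩ := multiset_card_eq_four' hcard
  have hprod : f.map φ = (X - C a) * ((X - C b) * ((X - C c) * ((X - C d) * 1))) := by
    have h := hGsplits.eq_prod_roots_of_monic hGmon
    rw [habcd] at h
    simpa [Multiset.map_cons, Multiset.prod_cons] using h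
  obtain ⟨kk, hkk⟩ : ∃ x, φ k1 = x := ⟨_, rfl⟩
  obtain ⟨mm, hmm⟩ : ∃ x, φ m1 = x := ⟨_, rfl⟩
  obtain ⟨tt, htt⟩ : ∃ x, φ t1 = x := ⟨_, rfl⟩
  have hx : ∀ x : L, (x - a) * ((x - b) * ((x - c) * ((x - d) * 1))) =
      x ^ 4 + (-tt) * x ^ 3 + (-(2 * kk)) * x ^ 2 + (-(8 * mm + kk * tt)) * x
        + (kk ^ 2 - mm * tt) := by
    intro x
    have h1 := congrArg (eval x) hprod
    rw [eval_map, ← hfdef, quart_eval₂] at h1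
    simp only [eval_mul, eval_sub, eval_X, eval_C, eval_one, map_neg, map_add, map_mul,
      map_sub, map_pow, map_ofNat] at h1
    rw [hkk, hmm, htt] at h1
    linear_combination -h1
  -- unfold the discriminant
  rw [polyDisc, polyRes, hdeg, hmon.leadingCoeff, habcd]
  simp only [Multiset.insert_eq_cons, Multiset.map_cons, Multiset.map_singleton,
    Multiset.prod_cons, Multiset.prod_singleton, map_one, one_pow, inv_one, one_mul]
  have haev : ∀ x : L, (aeval x) (derivative f) =
      4 * x ^ 3 + 3 * (-tt) * x ^ 2 + 2 * (-(2 * kk)) * x + (-(8 * mm + kk * tt)) := by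
    intro x
    rw [← hfdef, quart_aeval_der]
    simp only [map_neg, map_add, map_mul, map_sub, map_pow, map_ofNat]
    rw [hkk, hmm, htt]
  rw [haev a, haev b, haev c, haev d]
  have hmapRHS : φ ((-4 * k1 ^ 3 - 27 * m1 ^ 2) * (t1 ^ 3 + 16 * k1 * t1 + 64 * m1) ^ 2) =
      (-4 * kk ^ 3 - 27 * mm ^ 2) * (tt ^ 3 + 16 * kk * tt + 64 * mm) ^ 2 := by
    simp only [map_mul, map_sub, map_add, map_pow, map_neg, map_ofNat]
    rw [hkk, hmm, htt]
  rw [hφ] at hmapRHS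
  rw [hmapRHS]
  have h0 := hx 0
  have h1 := hx 1
  have hm1 := hx (-1)
  have h2 := hx 2
  have hm2 := hx (-2)
  have htt : tt = a + b + c + d := by
    linear_combination (-1/6 : L) * h1 + (1/6 : L) * hm1 + (1/12 : L) * h2 + (-1/12 : L) * hm2
  have hkk2 : kk = -(a*b + a*c + a*d + b*c + b*d + c*d)/2 := by
    linear_combination (1/4 : L) * h1 + (1/4 : L) * hm1 + (-1/2 : L) * h0
  have hmm2 : mm = ((a*b*c + a*b*d + a*c*d + b*c*d) - kk*tt)/8 := by
    linear_combination (1/12 : L) * h1 + (-1/12 : L) * hm1 + (-1/96 : L) * h2 + (1/96 : L) * hm2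
  have h4 : a*b*c*d = kk^2 - mm*tt := by
    linear_combination h0
  clear hx hkk hmm hprod habcd hcard h0 h1 hm1 h2 hm2 hmapRHS haev hf hfdef hmon hdeg hGmon hGsplits
  subst htt hkk2 hmm2
  linear_combination ((27/16 : L)*c*d^7 + (-37/8 : L)*c^2*d^6 + (-27/16 : L)*c^3*d^5 + (37/4 : L)*c^4*d^4 + (-27/16 : L)*c^5*d^3 + (-37/8 : L)*c^6*d^2 + (27/16 : L)*c^7*d + (27/16 : L)*b*d^7 + (-67/16 : L)*b*c*d^6 + (135/16 : L)*b*c^2*d^5 + (-95/16 : L)*b*c^3*d^4 + (-95/16 : L)*b*c^4*d^3 + (135/16 : L)*b*c^5*d^2 + (-67/16 : L)*b*c^6*d + (27/16 : L)*b*c^7 + (-37/8 : L)*b^2*d^6 + (135/16 : L)*b^2*c*d^5 + (-57/8 : L)*b^2*c^2*d^4 + (61/8 : L)*b^2*c^3*d^3 + (-57/8 : L)*b^2*c^4*d^2 + (135/16 : L)*b^2*c^5*d + (-37/8 : L)*b^2*c^6 + (-27/16 : L)*b^3*d^5 + (-95/16 : L)*b^3*c*d^4 + (61/8 : L)*b^3*c^2*d^3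 + (61/8 : L)*b^3*c^3*d^2 + (-95/16 : L)*b^3*c^4*d + (-27/16 : L)*b^3*c^5 + (37/4 : L)*b^4*d^4 + (-95/16 : L)*b^4*c*d^3 + (-57/8 : L)*b^4*c^2*d^2 + (-95/16 : L)*b^4*c^3*d + (37/4 : L)*b^4*c^4 + (-27/16 : L)*b^5*d^3 + (135/16 : L)*b^5*c*d^2 + (135/16 : L)*b^5*c^2*d + (-27/16 : L)*b^5*c^3 + (-37/8 : L)*b^6*d^2 + (-67/16 : L)*b^6*c*d + (-37/8 : L)*b^6*c^2 + (27/16 : L)*b^7*d + (27/16 : L)*b^7*c + (27/16 : L)*a*d^7 + (-67/16 : L)*a*c*d^6 + (135/16 : L)*a*c^2*d^5 + (-95/16 : L)*a*c^3*d^4 + (-95/16 : L)*a*c^4*d^3 + (135/16 : L)*a*c^5*d^2 + (-67/16 : L)*a*c^6*d + (27/16 : L)*a*c^7 + (-67/16 : L)*a*b*d^6 + (27/4 : L)*a*b*c*d^5 + (-69/16 : L)*a*b*c^2*d^4 + (3/2 : L)*a*b*c^3*d^3 + (-69/16 : L)*a*b*c^4*d^2 + (27/4 : L)*a*b*c^5*d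 + (-67/16 : L)*a*b*c^6 + (135/16 : L)*a*b^2*d^5 + (-69/16 : L)*a*b^2*c*d^4 + (-33/8 : L)*a*b^2*c^2*d^3 + (-33/8 : L)*a*b^2*c^3*d^2 + (-69/16 : L)*a*b^2*c^4*d + (135/16 : L)*a*b^2*c^5 + (-95/16 : L)*a*b^3*d^4 + (3/2 : L)*a*b^3*c*d^3 + (-33/8 : L)*a*b^3*c^2*d^2 + (3/2 : L)*a*b^3*c^3*d + (-95/16 : L)*a*b^3*c^4 + (-95/16 : L)*a*b^4*d^3 + (-69/16 : L)*a*b^4*c*d^2 + (-69/16 : L)*a*b^4*c^2*d + (-95/16 : L)*a*b^4*c^3 + (135/16 : L)*a*b^5*d^2 + (27/4 : L)*a*b^5*c*d + (135/16 : L)*a*b^5*c^2 + (-67/16 : L)*a*b^6*d + (-67/16 : L)*a*b^6*c + (27/16 : L)*a*b^7 + (-37/8 : L)*a^2*d^6 + (135/16 : L)*a^2*c*d^5 + (-57/8 : L)*a^2*c^2*d^4 + (61/8 : L)*a^2*c^3*d^3 + (-57/8 : L)*a^2*c^4*d^2 + (135/16 : L)*a^2*c^5*d + (-37/8 : L)*a^2*c^6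 + (135/16 : L)*a^2*b*d^5 + (-69/16 : L)*a^2*b*c*d^4 + (-33/8 : L)*a^2*b*c^2*d^3 + (-33/8 : L)*a^2*b*c^3*d^2 + (-69/16 : L)*a^2*b*c^4*d + (135/16 : L)*a^2*b*c^5 + (-57/8 : L)*a^2*b^2*d^4 + (-33/8 : L)*a^2*b^2*c*d^3 + (99/2 : L)*a^2*b^2*c^2*d^2 + (-33/8 : L)*a^2*b^2*c^3*d + (-57/8 : L)*a^2*b^2*c^4 + (61/8 : L)*a^2*b^3*d^3 + (-33/8 : L)*a^2*b^3*c*d^2 + (-33/8 : L)*a^2*b^3*c^2*d + (61/8 : L)*a^2*b^3*c^3 + (-57/8 : L)*a^2*b^4*d^2 + (-69/16 : L)*a^2*b^4*c*d + (-57/8 : L)*a^2*b^4*c^2 + (135/16 : L)*a^2*b^5*d + (135/16 : L)*a^2*b^5*c + (-37/8 : L)*a^2*b^6 + (-27/16 : L)*a^3*d^5 + (-95/16 : L)*a^3*c*d^4 + (61/8 : L)*a^3*c^2*d^3 + (61/8 : L)*a^3*c^3*d^2 + (-95/16 : L)*a^3*c^4*d + (-27/16 : L)*a^3*c^5 + (-95/16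 : L)*a^3*b*d^4 + (3/2 : L)*a^3*b*c*d^3 + (-33/8 : L)*a^3*b*c^2*d^2 + (3/2 : L)*a^3*b*c^3*d + (-95/16 : L)*a^3*b*c^4 + (61/8 : L)*a^3*b^2*d^3 + (-33/8 : L)*a^3*b^2*c*d^2 + (-33/8 : L)*a^3*b^2*c^2*d + (61/8 : L)*a^3*b^2*c^3 + (61/8 : L)*a^3*b^3*d^2 + (3/2 : L)*a^3*b^3*c*d + (61/8 : L)*a^3*b^3*c^2 + (-95/16 : L)*a^3*b^4*d + (-95/16 : L)*a^3*b^4*c + (-27/16 : L)*a^3*b^5 + (37/4 : L)*a^4*d^4 + (-95/16 : L)*a^4*c*d^3 + (-57/8 : L)*a^4*c^2*d^2 + (-95/16 : L)*a^4*c^3*d + (37/4 : L)*a^4*c^4 + (-95/16 : L)*a^4*b*d^3 + (-69/16 : L)*a^4*b*c*d^2 + (-69/16 : L)*a^4*b*c^2*d + (-95/16 : L)*a^4*b*c^3 + (-57/8 : L)*a^4*b^2*d^2 + (-69/16 : L)*a^4*b^2*c*d + (-57/8 : L)*a^4*b^2*c^2 + (-95/16 : L)*a^4*b^3*d + (-95/16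 : L)*a^4*b^3*c + (37/4 : L)*a^4*b^4 + (-27/16 : L)*a^5*d^3 + (135/16 : L)*a^5*c*d^2 + (135/16 : L)*a^5*c^2*d + (-27/16 : L)*a^5*c^3 + (135/16 : L)*a^5*b*d^2 + (27/4 : L)*a^5*b*c*d + (135/16 : L)*a^5*b*c^2 + (135/16 : L)*a^5*b^2*d + (135/16 : L)*a^5*b^2*c + (-27/16 : L)*a^5*b^3 + (-37/8 : L)*a^6*d^2 + (-67/16 : L)*a^6*c*d + (-37/8 : L)*a^6*c^2 + (-67/16 : L)*a^6*b*d + (-67/16 : L)*a^6*b*c + (-37/8 : L)*a^6*b^2 + (27/16 : L)*a^7*d + (27/16 : L)*a^7*c + (27/16 : L)*a^7*b) * h4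
end
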